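/- Let u be twice continuously differentiable on the closure of Ω, let φ and α be real constants, and suppose u satisfies the boundary conditions (BC). Then ∫_Ω |∇u|² dx ≤ πρ²(2φα + φ²) + 4h² ∫_Ω (Δu)² dx. -/

import Mathlib

open MeasureTheory Real

/-- The open cylinder `Ω = {(x,y,z) : x² + y² < ρ², 0 < z < h}` in `ℝ³`. -/
def cyl (ρ h : ℝ) : Set (Fin 3 → ℝ) :=
  {x | (x 0) ^ 2 + (x 1) ^ 2 < ρ ^ 2 ∧ 0 < x 2 ∧ x 2 < h}

/-- The `i`-th partial derivative of `f`, computed within the closed cylinder. -/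
noncomputable def pdC (ρ h : ℝ) (i : Fin 3) (f : (Fin 3 → ℝ) → ℝ) (x : Fin 3 → ℝ) : ℝ :=
  fderivWithin ℝ f (closure (cyl ρ h)) x (Pi.single i 1)

/-- The Laplacian of `f`, computed within the closed cylinder. -/
noncomputable def lapC (ρ h : ℝ) (f : (Fin 3 → ℝ) → ℝ) (x : Fin 3 → ℝ) : ℝ :=
  ∑ i, pdC ρ h i (pdC ρ h i f) x

/-- The boundary conditions (BC): `u = φ` and `∂u/∂z = α` on the top disc `z = h`;
`u = 0` and `∂u/∂z = 0` on the bottom disc `z = 0`; and vanishing normal derivative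
`x ∂u/∂x + y ∂u/∂y = 0` on the lateral boundary `x² + y² = ρ²`, `0 ≤ z ≤ h`. -/
def BC (ρ h : ℝ) (u : (Fin 3 → ℝ) → ℝ) (φ α : ℝ) : Prop :=
  (∀ x y : ℝ, x ^ 2 + y ^ 2 ≤ ρ ^ 2 →
      u ![x, y, h] = φ ∧ pdC ρ h 2 u ![x, y, h] = α ∧
      u ![x, y, 0] = 0 ∧ pdC ρ h 2 u ![x, y, 0] = 0) ∧
  (∀ x y z : ℝ, x ^ 2 + y ^ 2 = ρ ^ 2 → 0 ≤ z → z ≤ h →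
      x * pdC ρ h 0 u ![x, y, z] + y * pdC ρ h 1 u ![x, y, z] = 0)

open Set

section Geometry
variable {ρ h : ℝ}

lemma isOpen_cyl : IsOpen (cyl ρ h) := by
  have h1 : IsOpen {x : Fin 3 → ℝ | (x 0) ^ 2 + (x 1) ^ 2 < ρ ^ 2} :=
    isOpen_lt (by continuity) continuous_const
  have h2 : IsOpen {x : Fin 3 → ℝ | 0 < x 2} := isOpen_lt continuous_const (continuous_apply 2)
  have h3 : IsOpen {x : Fin 3 → ℝ | x 2 < h} := isOpen_lt (continuous_apply 2) continuous_const
  have : cyl ρ h = {x : Fin 3 → ℝ | (x 0) ^ 2 + (x 1) ^ 2 < ρ ^ 2} ∩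
      ({x : Fin 3 → ℝ | 0 < x 2} ∩ {x : Fin 3 → ℝ | x 2 < h}) := by
    ext x; simp [cyl, and_assoc]
  rw [this]; exact h1.inter (h2.inter h3)

lemma convex_cyl : Convex ℝ (cyl ρ h) := by
  rintro x ⟨hx1, hx2, hx3⟩ y ⟨hy1, hy2, hy3⟩ a b ha hb hab
  have key : (a * x 0 + b * y 0) ^ 2 + (a * x 1 + b * y 1) ^ 2 ≤
      a * (x 0 ^ 2 + x 1 ^ 2) + b * (y 0 ^ 2 + y 1 ^ 2) := by
    nlinarith [mul_nonneg (mul_nonneg ha hb) (sq_nonneg (x 0 - y 0)),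
      mul_nonneg (mul_nonneg ha hb) (sq_nonneg (x 1 - y 1))]
  have key2 : a * (x 0 ^ 2 + x 1 ^ 2) + b * (y 0 ^ 2 + y 1 ^ 2) < ρ ^ 2 := by
    rcases eq_or_lt_of_le ha with rfl | ha'
    · have : b = 1 := by linarith
      subst this; nlinarith
    · nlinarith [mul_le_mul_of_nonneg_left hy1.le hb]
  refine ⟨?_, ?_, ?_⟩
  · simp only [Pi.add_apply, Pi.smul_apply, smul_eq_mul]; linarith
  · simp only [Pi.add_apply, Pi.smul_apply, smul_eq_mul]
    rcases eq_or_lt_of_le ha with rfl | ha'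
    · have : b = 1 := by linarith
      subst this; nlinarith
    · nlinarith
  · simp only [Pi.add_apply, Pi.smul_apply, smul_eq_mul]
    rcases eq_or_lt_of_le ha with rfl | ha'
    · have : b = 1 := by linarith
      subst this; nlinarith
    · nlinarith

lemma closure_cyl (hρ : 0 < ρ) (hh : 0 < h) :
    closure (cyl ρ h) = {x | (x 0) ^ 2 + (x 1) ^ 2 ≤ ρ ^ 2 ∧ x 2 ∈ Icc 0 h} := by
  apply Subset.antisymm
  · refine closure_minimal (fun x hx => ⟨hx.1.le, hx.2.1.le, hx.2.2.le⟩) ?_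
    have h1 : IsClosed {x : Fin 3 → ℝ | (x 0) ^ 2 + (x 1) ^ 2 ≤ ρ ^ 2} :=
      isClosed_le (by continuity) continuous_const
    have h2 : IsClosed {x : Fin 3 → ℝ | 0 ≤ x 2} := isClosed_le continuous_const (continuous_apply 2)
    have h3 : IsClosed {x : Fin 3 → ℝ | x 2 ≤ h} := isClosed_le (continuous_apply 2) continuous_const
    have : {x : Fin 3 → ℝ | (x 0) ^ 2 + (x 1) ^ 2 ≤ ρ ^ 2 ∧ x 2 ∈ Icc 0 h} =
        {x : Fin 3 → ℝ | (x 0) ^ 2 + (x 1) ^ 2 ≤ ρ ^ 2} ∩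
        ({x : Fin 3 → ℝ | 0 ≤ x 2} ∩ {x : Fin 3 → ℝ | x 2 ≤ h}) := by
      ext x; simp [Icc, and_assoc]
    rw [this]; exact h1.inter (h2.inter h3)
  · rintro p ⟨hp1, hp2, hp3⟩
    set c : Fin 3 → ℝ := ![0, 0, h/2] with hc
    have hmem : ∀ t : ℝ, t ∈ Ioo (0:ℝ) 1 → c + t • (p - c) ∈ cyl ρ h := by
      rintro t ⟨ht0, ht1⟩
      have hc0 : c 0 = 0 := rfl
      have hc1 : c 1 = 0 := rfl
      have hc2 : c 2 = h/2 := rfl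
      have e0 : (c + t • (p - c)) 0 = t * p 0 := by
        have : (c + t • (p - c)) 0 = c 0 + t * (p 0 - c 0) := rfl
        rw [this, hc0]; ring
      have e1 : (c + t • (p - c)) 1 = t * p 1 := by
        have : (c + t • (p - c)) 1 = c 1 + t * (p 1 - c 1) := rfl
        rw [this, hc1]; ring
      have e2 : (c + t • (p - c)) 2 = h/2 + t * (p 2 - h/2) := by
        have : (c + t • (p - c)) 2 = c 2 + t * (p 2 - c 2) := rfl
        rw [this, hc2]
      refine ⟨?_, ?_, ?_⟩
      · rw [e0, e1]
        have ht2 : t^2 < 1 := by nlinarith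
        nlinarith [mul_le_mul_of_nonneg_left hp1 (sq_nonneg t),
          mul_lt_mul_of_pos_right ht2 (by positivity : (0:ℝ) < ρ^2)]
      · rw [e2]; nlinarith
      · rw [e2]; nlinarith
    have htend : Filter.Tendsto (fun t : ℝ => c + t • (p - c)) (nhdsWithin 1 (Ioo (0:ℝ) 1))
        (nhds p) := by
      have : Filter.Tendsto (fun t : ℝ => c + t • (p - c)) (nhds 1) (nhds (c + (1:ℝ) • (p - c))) :=
        ((continuous_const.add ((continuous_id (X := ℝ)).smul continuous_const)).tendsto 1)
      rw [one_smul, add_sub_cancel] at this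
      exact this.mono_left nhdsWithin_le_nhds
    have hne : (nhdsWithin (1:ℝ) (Ioo (0:ℝ) 1)).NeBot := by
      rw [← mem_closure_iff_nhdsWithin_neBot, closure_Ioo (by norm_num : (0:ℝ) ≠ 1)]
      exact ⟨zero_le_one, le_refl 1⟩
    exact mem_closure_of_tendsto htend (Filter.eventually_of_mem self_mem_nhdsWithin hmem)

end Geometry

section Reg
variable {ρ h : ℝ}

lemma mem_K_mk (hρ : 0 < ρ) (hh : 0 < h) {a b t : ℝ} (hab : a^2 + b^2 ≤ ρ^2)
    (ht0 : 0 ≤ t) (ht1 : t ≤ h) : (![a,b,t] : Fin 3 → ℝ) ∈ closure (cyl ρ h) := by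
  rw [closure_cyl hρ hh]; exact ⟨hab, ht0, ht1⟩

lemma mem_cyl_mk {a b t : ℝ} (hab : a^2 + b^2 < ρ^2) (ht0 : 0 < t) (ht1 : t < h) :
    (![a,b,t] : Fin 3 → ℝ) ∈ cyl ρ h := ⟨hab, ht0, ht1⟩

lemma cyl_subset_K : cyl ρ h ⊆ closure (cyl ρ h) := subset_closure

lemma K_mem_nhds {x : Fin 3 → ℝ} (hx : x ∈ cyl ρ h) : closure (cyl ρ h) ∈ nhds x :=
  Filter.mem_of_superset (isOpen_cyl.mem_nhds hx) subset_closure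

lemma cyl_nonempty (hρ : 0 < ρ) (hh : 0 < h) : (cyl ρ h).Nonempty := by
  refine ⟨![0,0,h/2], ?_, ?_, ?_⟩ <;> simp <;> [positivity; linarith; linarith]

lemma uniqueDiffOn_K (hρ : 0 < ρ) (hh : 0 < h) : UniqueDiffOn ℝ (closure (cyl ρ h)) := by
  apply uniqueDiffOn_convex (convex_cyl (ρ := ρ) (h := h)).closure
  obtain ⟨x, hx⟩ := cyl_nonempty hρ hh
  refine ⟨x, interior_mono subset_closure ?_⟩
  rw [isOpen_cyl.interior_eq]; exact hx

lemma isCompact_K (hρ : 0 < ρ) (hh : 0 < h) : IsCompact (closure (cyl ρ h)) := by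
  have : Bornology.IsBounded (closure (cyl ρ h)) := by
    apply Bornology.IsBounded.closure
    rw [Metric.isBounded_iff_subset_closedBall 0]
    refine ⟨ρ + h, fun x hx => ?_⟩
    obtain ⟨h1, h2, h3⟩ := hx
    rw [Metric.mem_closedBall, dist_zero_right]
    refine (pi_norm_le_iff_of_nonneg (by linarith)).2 fun i => ?_
    have b0 : ‖x 0‖ ≤ ρ + h := by
      rw [Real.norm_eq_abs, abs_le]; constructor <;>
        nlinarith [sq_nonneg (x 1), sq_nonneg (x 0 + ρ), sq_nonneg (x 0 - ρ)]
    have b1 : ‖x 1‖ ≤ ρ + h := by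
      rw [Real.norm_eq_abs, abs_le]; constructor <;>
        nlinarith [sq_nonneg (x 0), sq_nonneg (x 1 + ρ), sq_nonneg (x 1 - ρ)]
    have b2 : ‖x 2‖ ≤ ρ + h := by
      rw [Real.norm_eq_abs, abs_le]; constructor <;> linarith
    fin_cases i
    exacts [b0, b1, b2]
  exact Metric.isCompact_of_isClosed_isBounded isClosed_closure this
end Reg

section Deriv
variable {ρ h : ℝ} {u : (Fin 3 → ℝ) → ℝ}

lemma contDiffOn_pdC (hρ : 0 < ρ) (hh : 0 < h) (hu : ContDiffOn ℝ 2 u (closure (cyl ρ h)))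
    (i : Fin 3) : ContDiffOn ℝ 1 (pdC ρ h i u) (closure (cyl ρ h)) := by
  have h1 : ContDiffOn ℝ 1 (fderivWithin ℝ u (closure (cyl ρ h))) (closure (cyl ρ h)) :=
    hu.fderivWithin (uniqueDiffOn_K hρ hh) (by norm_num)
  exact h1.clm_apply contDiffOn_const

lemma continuousOn_pdC (hρ : 0 < ρ) (hh : 0 < h) (hu : ContDiffOn ℝ 2 u (closure (cyl ρ h)))
    (i : Fin 3) : ContinuousOn (pdC ρ h i u) (closure (cyl ρ h)) :=
  (contDiffOn_pdC hρ hh hu i).continuousOn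

lemma continuousOn_pdC2 (hρ : 0 < ρ) (hh : 0 < h) (hu : ContDiffOn ℝ 2 u (closure (cyl ρ h)))
    (i j : Fin 3) : ContinuousOn (pdC ρ h i (pdC ρ h j u)) (closure (cyl ρ h)) := by
  have h1 : ContinuousOn (fderivWithin ℝ (pdC ρ h j u) (closure (cyl ρ h))) (closure (cyl ρ h)) :=
    (contDiffOn_pdC hρ hh hu j).continuousOn_fderivWithin (uniqueDiffOn_K hρ hh) le_rfl
  exact h1.clm_apply continuousOn_const

lemma hasFDerivAt_u_interior (hu : ContDiffOn ℝ 2 u (closure (cyl ρ h))) {x : Fin 3 → ℝ}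
    (hx : x ∈ cyl ρ h) : HasFDerivAt u (fderivWithin ℝ u (closure (cyl ρ h)) x) x := by
  have hd : DifferentiableWithinAt ℝ u (closure (cyl ρ h)) x :=
    (hu.differentiableOn (by norm_num)) x (subset_closure hx)
  have hK := K_mem_nhds hx
  rw [fderivWithin_of_mem_nhds hK]
  exact (hd.differentiableAt hK).hasFDerivAt

lemma hasFDerivAt_pdC_interior (hρ : 0 < ρ) (hh : 0 < h)
    (hu : ContDiffOn ℝ 2 u (closure (cyl ρ h))) (i : Fin 3) {x : Fin 3 → ℝ}
    (hx : x ∈ cyl ρ h) :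
    HasFDerivAt (pdC ρ h i u) (fderivWithin ℝ (pdC ρ h i u) (closure (cyl ρ h)) x) x := by
  have hd : DifferentiableWithinAt ℝ (pdC ρ h i u) (closure (cyl ρ h)) x :=
    ((contDiffOn_pdC hρ hh hu i).differentiableOn (by norm_num)) x (subset_closure hx)
  have hK := K_mem_nhds hx
  rw [fderivWithin_of_mem_nhds hK]
  exact (hd.differentiableAt hK).hasFDerivAt

lemma fderivWithin_apply_pdC (i : Fin 3) (x : Fin 3 → ℝ) :
    fderivWithin ℝ u (closure (cyl ρ h)) x (Pi.single i 1) = pdC ρ h i u x := rfl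

lemma fderivWithin_apply_pdC2 (i j : Fin 3) (x : Fin 3 → ℝ) :
    fderivWithin ℝ (pdC ρ h j u) (closure (cyl ρ h)) x (Pi.single i 1)
      = pdC ρ h i (pdC ρ h j u) x := rfl

end Deriv

section Meas
variable {ρ h : ℝ}

def disc (ρ : ℝ) : Set (ℝ × ℝ) := {q | q.1^2 + q.2^2 < ρ^2}

lemma isOpen_disc : IsOpen (disc ρ) := isOpen_lt (by continuity) continuous_const

lemma measurableSet_disc : MeasurableSet (disc ρ) := isOpen_disc.measurableSet

noncomputable def E3 : (Fin 3 → ℝ) ≃ᵐ ℝ × (ℝ × ℝ) :=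
  (MeasurableEquiv.piFinSuccAbove (fun _ : Fin 3 => ℝ) 2).trans
    ((MeasurableEquiv.refl ℝ).prodCongr MeasurableEquiv.finTwoArrow)

lemma E3_symm_apply (z x y : ℝ) : E3.symm (z, (x, y)) = ![x, y, z] := by
  funext i
  fin_cases i <;> rfl

lemma measurePreserving_E3 : MeasurePreserving E3 volume volume := by
  have h2 : MeasurePreserving (⇑((MeasurableEquiv.refl ℝ).prodCongr
      (MeasurableEquiv.finTwoArrow (α := ℝ)))) volume volume := by
    have := (MeasurePreserving.id (volume : Measure ℝ)).prod
      (volume_preserving_finTwoArrow ℝ)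
    exact this
  exact h2.comp (volume_preserving_piFinSuccAbove (fun _ : Fin 3 => ℝ) 2)

lemma E3_symm_preimage_cyl (hρ : 0 < ρ) (hh : 0 < h) :
    (⇑E3.symm) ⁻¹' (cyl ρ h) = Ioo (0:ℝ) h ×ˢ disc ρ := by
  ext ⟨z, x, y⟩
  rw [Set.mem_preimage, E3_symm_apply]
  constructor
  · rintro ⟨h1, h2, h3⟩; exact ⟨⟨h2, h3⟩, h1⟩
  · rintro ⟨⟨h2, h3⟩, h1⟩; exact ⟨h1, h2, h3⟩

lemma integrableOn_cyl_of_continuousOn (hρ : 0 < ρ) (hh : 0 < h)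
    {f : (Fin 3 → ℝ) → ℝ} (hf : ContinuousOn f (closure (cyl ρ h))) :
    IntegrableOn f (cyl ρ h) :=
  (hf.integrableOn_compact (isCompact_K hρ hh)).mono_set subset_closure

lemma integral_cyl_prod (hρ : 0 < ρ) (hh : 0 < h) (f : (Fin 3 → ℝ) → ℝ) :
    ∫ x in cyl ρ h, f x = ∫ p in Ioo (0:ℝ) h ×ˢ disc ρ, f ![p.2.1, p.2.2, p.1] := by
  have := (measurePreserving_E3.symm E3).setIntegral_preimage_emb
    E3.symm.measurableEmbedding f (cyl ρ h)
  rw [E3_symm_preimage_cyl hρ hh] at this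
  rw [← this]
  apply setIntegral_congr_fun ((measurableSet_Ioo).prod measurableSet_disc)
  rintro ⟨z, x, y⟩ _
  show f (E3.symm (z, (x, y))) = f ![x, y, z]
  rw [E3_symm_apply]

lemma integrableOn_prod_of_cyl (hρ : 0 < ρ) (hh : 0 < h) {f : (Fin 3 → ℝ) → ℝ}
    (hf : IntegrableOn f (cyl ρ h)) :
    Integrable (fun p : ℝ × (ℝ × ℝ) => f ![p.2.1, p.2.2, p.1])
      ((volume.restrict (Ioo (0:ℝ) h)).prod (volume.restrict (disc ρ))) := by
  rw [Measure.prod_restrict, ← Measure.volume_eq_prod]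
  have hmp : MeasurePreserving (⇑E3.symm)
      (volume.restrict (Ioo (0:ℝ) h ×ˢ disc ρ)) (volume.restrict (cyl ρ h)) := by
    have := (measurePreserving_E3.symm E3).restrict_preimage
      (isOpen_cyl (ρ := ρ) (h := h)).measurableSet
    rwa [E3_symm_preimage_cyl hρ hh] at this
  have := (hmp.integrable_comp_emb E3.symm.measurableEmbedding).2 hf
  apply this.congr
  apply Filter.Eventually.of_forall
  rintro ⟨z, x, y⟩
  rw [Function.comp_apply, E3_symm_apply]

lemma integral_cyl_iterated (hρ : 0 < ρ) (hh : 0 < h) {f : (Fin 3 → ℝ) → ℝ}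
    (hf : IntegrableOn f (cyl ρ h)) :
    ∫ x in cyl ρ h, f x = ∫ z in Ioo (0:ℝ) h, ∫ q in disc ρ, f ![q.1, q.2, z] := by
  rw [integral_cyl_prod hρ hh, Measure.volume_eq_prod, ← Measure.prod_restrict]
  exact integral_prod _ (integrableOn_prod_of_cyl hρ hh hf)

lemma integral_cyl_iterated_swap (hρ : 0 < ρ) (hh : 0 < h) {f : (Fin 3 → ℝ) → ℝ}
    (hf : IntegrableOn f (cyl ρ h)) :
    ∫ x in cyl ρ h, f x = ∫ q in disc ρ, ∫ z in Ioo (0:ℝ) h, f ![q.1, q.2, z] := by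
  rw [integral_cyl_prod hρ hh, Measure.volume_eq_prod, ← Measure.prod_restrict]
  exact integral_prod_symm _ (integrableOn_prod_of_cyl hρ hh hf)

end Meas

section Polar
variable {ρ : ℝ}

lemma polar_disc (hρ : 0 < ρ) (F : ℝ × ℝ → ℝ) :
    ∫ q in disc ρ, F q =
      ∫ p in Ioo (0:ℝ) ρ ×ˢ Ioo (-π) π, p.1 * F (p.1 * cos p.2, p.1 * sin p.2) := by
  have h0 := integral_comp_polarCoord_symm (Set.indicator (disc ρ) F)
  rw [integral_indicator measurableSet_disc] at h0
  rw [← h0]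
  have hsub : Ioo (0:ℝ) ρ ×ˢ Ioo (-π) π ⊆ polarCoord.target := by
    rintro ⟨r, θ⟩ ⟨hr, hθ⟩
    exact ⟨hr.1, hθ⟩
  have hcong : ∀ p ∈ polarCoord.target,
      p.1 • Set.indicator (disc ρ) F (polarCoord.symm p) =
        Set.indicator (Ioo (0:ℝ) ρ ×ˢ Ioo (-π) π)
          (fun p : ℝ × ℝ => p.1 * F (p.1 * cos p.2, p.1 * sin p.2)) p := by
    rintro ⟨r, θ⟩ ⟨hr, hθ⟩
    simp only [polarCoord_symm_apply, smul_eq_mul]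
    have habs : (r * cos θ)^2 + (r * sin θ)^2 = r^2 := by
      have := sin_sq_add_cos_sq θ; nlinarith [this]
    by_cases hd : r < ρ
    · have hin : (r * cos θ, r * sin θ) ∈ disc ρ := by
        show (r * cos θ)^2 + (r * sin θ)^2 < ρ^2
        rw [habs]; exact sq_lt_sq' (by nlinarith [mem_Ioi.mp hr]) hd
      rw [Set.indicator_of_mem hin, Set.indicator_of_mem (by exact ⟨⟨mem_Ioi.mp hr, hd⟩, hθ⟩)]
    · have hout : (r * cos θ, r * sin θ) ∉ disc ρ := by
        show ¬ ((r * cos θ)^2 + (r * sin θ)^2 < ρ^2)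
        rw [habs]; push_neg at hd ⊢; nlinarith [mem_Ioi.mp hr]
      rw [Set.indicator_of_notMem hout,
        Set.indicator_of_notMem (by rintro ⟨⟨_, hlt⟩, _⟩; exact hd hlt), mul_zero]
  rw [setIntegral_congr_fun polarCoord.open_target.measurableSet hcong,
    setIntegral_indicator ((measurableSet_Ioo).prod measurableSet_Ioo),
    Set.inter_eq_self_of_subset_right hsub]

lemma area_disc (hρ : 0 < ρ) : ∫ _ in disc ρ, (1:ℝ) = π * ρ^2 := by
  rw [polar_disc hρ]
  simp only [mul_one]
  rw [Measure.volume_eq_prod, ← Measure.prod_restrict]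
  have hint : Integrable (fun p : ℝ × ℝ => p.1)
      ((volume.restrict (Ioo (0:ℝ) ρ)).prod (volume.restrict (Ioo (-π) π))) := by
    rw [Measure.prod_restrict, ← Measure.volume_eq_prod]
    exact ((continuous_fst.continuousOn).integrableOn_compact
      (isCompact_Icc.prod isCompact_Icc)).mono_set
      (Set.prod_mono Ioo_subset_Icc_self Ioo_subset_Icc_self)
  rw [integral_prod _ hint]
  have hin : ∀ r : ℝ, ∫ _ in Ioo (-π) π, r = (2*π) * r := by
    intro r
    rw [setIntegral_const, measureReal_def, Real.volume_Ioo, smul_eq_mul]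
    congr 1
    rw [ENNReal.toReal_ofReal (by linarith [pi_pos])]
    ring
  simp only [hin]
  rw [integral_const_mul]
  have : ∫ r in Ioo (0:ℝ) ρ, r = ρ^2/2 := by
    rw [setIntegral_congr_set Ioo_ae_eq_Ioc, ← intervalIntegral.integral_of_le hρ.le,
      integral_id]
    ring
  rw [this]; ring
end Polar

section CS
open MeasureTheory

lemma memL2_of_contOn {X : Type*} [MeasurableSpace X] [TopologicalSpace X]
    [OpensMeasurableSpace X] {μ : Measure X} {s k : Set X} [IsFiniteMeasure (μ.restrict s)]
    (hsk : s ⊆ k) (hk : IsCompact k) (hs : MeasurableSet s) {f : X → ℝ}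
    (hf : ContinuousOn f k) : MemLp f 2 (μ.restrict s) := by
  obtain ⟨C, hC⟩ := hk.exists_bound_of_continuousOn hf
  apply MemLp.of_bound ((hf.mono hsk).aestronglyMeasurable hs) C
  filter_upwards [ae_restrict_mem hs] with x hx
  exact hC x (hsk hx)

lemma cs2 {X : Type*} [MeasurableSpace X] {μ : Measure X} {f g : X → ℝ}
    (hf : MemLp f 2 μ) (hg : MemLp g 2 μ) :
    ∫ x, f x * g x ∂μ ≤ Real.sqrt (∫ x, (f x)^2 ∂μ) * Real.sqrt (∫ x, (g x)^2 ∂μ) := by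
  have h1 : MemLp (f • g) 1 μ := MemLp.smul (hpqr := ⟨by norm_num [ENNReal.inv_two_add_inv_two]⟩) hg hf
  have hfg : Integrable (fun x => f x * g x) μ := by
    have := memLp_one_iff_integrable.mp h1
    exact this
  have habsint : Integrable (fun x => |f x| * |g x|) μ := by
    apply hfg.abs.congr
    exact Filter.Eventually.of_forall fun x => (abs_mul _ _)
  have habs : ∫ x, f x * g x ∂μ ≤ ∫ x, |f x| * |g x| ∂μ := by
    apply integral_mono_ae hfg habsint
    exact Filter.Eventually.of_forall fun x => by
      calc f x * g x ≤ |f x * g x| := le_abs_self _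
      _ = |f x| * |g x| := abs_mul _ _
  have h2 : (2:ℝ).HolderConjugate 2 := Real.HolderConjugate.two_two
  have hofr : ENNReal.ofReal (2:ℝ) = 2 := by norm_num
  have hf2 : MemLp (fun x => |f x|) (ENNReal.ofReal (2:ℝ)) μ := by rw [hofr]; exact hf.abs
  have hg2 : MemLp (fun x => |g x|) (ENNReal.ofReal (2:ℝ)) μ := by rw [hofr]; exact hg.abs
  have hH := integral_mul_le_Lp_mul_Lq_of_nonneg h2
    (Filter.Eventually.of_forall fun x => abs_nonneg (f x))
    (Filter.Eventually.of_forall fun x => abs_nonneg (g x)) hf2 hg2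
  have e : ∀ y : ℝ, |y| ^ (2:ℝ) = y^2 := fun y => by
    rw [show (2:ℝ) = ((2:ℕ):ℝ) by norm_num, Real.rpow_natCast, sq_abs]
  simp only [e] at hH
  rw [← Real.sqrt_eq_rpow, ← Real.sqrt_eq_rpow] at hH
  exact habs.trans hH

end CS

section Line
variable {ρ h : ℝ} {u : (Fin 3 → ℝ) → ℝ}

lemma line_gamma_eq (q : ℝ × ℝ) : (fun t : ℝ => (![q.1, q.2, t] : Fin 3 → ℝ))
    = fun t : ℝ => (![q.1, q.2, 0] : Fin 3 → ℝ) + t • (Pi.single 2 1 : Fin 3 → ℝ) := by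
  funext t
  funext i
  fin_cases i <;> simp [Pi.single_apply]

lemma line_gamma_deriv (q : ℝ × ℝ) (t : ℝ) :
    HasDerivAt (fun t : ℝ => (![q.1, q.2, t] : Fin 3 → ℝ)) (Pi.single 2 1) t := by
  rw [line_gamma_eq]
  simpa using (((hasDerivAt_id t).smul_const (Pi.single 2 1 : Fin 3 → ℝ)).const_add
    (![q.1, q.2, 0] : Fin 3 → ℝ))

lemma line_gamma_cont (q : ℝ × ℝ) :
    Continuous (fun t : ℝ => (![q.1, q.2, t] : Fin 3 → ℝ)) := by
  rw [line_gamma_eq]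
  exact continuous_const.add (continuous_id.smul continuous_const)

lemma green_line (hρ : 0 < ρ) (hh : 0 < h) (hu : ContDiffOn ℝ 2 u (closure (cyl ρ h)))
    {q : ℝ × ℝ} (hq : q ∈ disc ρ) {φ α : ℝ}
    (hTopU : u ![q.1, q.2, h] = φ) (hTopD : pdC ρ h 2 u ![q.1, q.2, h] = α)
    (hBotU : u ![q.1, q.2, 0] = 0) :
    ∫ t in Ioo (0:ℝ) h, ((pdC ρ h 2 u ![q.1, q.2, t])^2
      + u ![q.1, q.2, t] * pdC ρ h 2 (pdC ρ h 2 u) ![q.1, q.2, t]) = φ * α := by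
  have hdq : q.1^2 + q.2^2 < ρ^2 := hq
  have hmapsK : ∀ t : ℝ, t ∈ Icc (0:ℝ) h → (![q.1, q.2, t] : Fin 3 → ℝ) ∈ closure (cyl ρ h) :=
    fun t ht => mem_K_mk hρ hh hdq.le ht.1 ht.2
  have hmemC : ∀ t : ℝ, t ∈ Ioo (0:ℝ) h → (![q.1, q.2, t] : Fin 3 → ℝ) ∈ cyl ρ h :=
    fun t ht => mem_cyl_mk hdq ht.1 ht.2
  have hdu : ∀ t ∈ Ioo (0:ℝ) h, HasDerivAt (fun t : ℝ => u ![q.1, q.2, t])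
      (pdC ρ h 2 u ![q.1, q.2, t]) t :=
    fun t ht => (hasFDerivAt_u_interior hu (hmemC t ht)).comp_hasDerivAt t (line_gamma_deriv q t)
  have hdp : ∀ t ∈ Ioo (0:ℝ) h, HasDerivAt (fun t : ℝ => pdC ρ h 2 u ![q.1, q.2, t])
      (pdC ρ h 2 (pdC ρ h 2 u) ![q.1, q.2, t]) t :=
    fun t ht => by
      have := (hasFDerivAt_pdC_interior hρ hh hu 2 (hmemC t ht)).comp_hasDerivAt t
        (line_gamma_deriv q t)
      exact this
  have hFder : ∀ t ∈ Ioo (0:ℝ) h,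
      HasDerivAt (fun t : ℝ => u ![q.1, q.2, t] * pdC ρ h 2 u ![q.1, q.2, t])
        ((pdC ρ h 2 u ![q.1, q.2, t])^2
          + u ![q.1, q.2, t] * pdC ρ h 2 (pdC ρ h 2 u) ![q.1, q.2, t]) t := by
    intro t ht
    have := (hdu t ht).fun_mul (hdp t ht)
    simpa [sq] using this
  have hFcont : ContinuousOn (fun t : ℝ => u ![q.1, q.2, t] * pdC ρ h 2 u ![q.1, q.2, t])
      (Icc (0:ℝ) h) :=
    (hu.continuousOn.comp (line_gamma_cont q).continuousOn hmapsK).mul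
      ((continuousOn_pdC hρ hh hu 2).comp (line_gamma_cont q).continuousOn hmapsK)
  have hIcont : ContinuousOn (fun t : ℝ => (pdC ρ h 2 u ![q.1, q.2, t])^2
      + u ![q.1, q.2, t] * pdC ρ h 2 (pdC ρ h 2 u) ![q.1, q.2, t]) (Icc (0:ℝ) h) :=
    (((continuousOn_pdC hρ hh hu 2).comp (line_gamma_cont q).continuousOn hmapsK).pow 2).add
      ((hu.continuousOn.comp (line_gamma_cont q).continuousOn hmapsK).mul
        ((continuousOn_pdC2 hρ hh hu 2 2).comp (line_gamma_cont q).continuousOn hmapsK))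
  have hInt : IntervalIntegrable (fun t : ℝ => (pdC ρ h 2 u ![q.1, q.2, t])^2
      + u ![q.1, q.2, t] * pdC ρ h 2 (pdC ρ h 2 u) ![q.1, q.2, t]) volume 0 h :=
    ContinuousOn.intervalIntegrable (by rw [uIcc_of_le hh.le]; exact hIcont)
  have hFTC := intervalIntegral.integral_eq_sub_of_hasDeriv_right_of_le hh.le hFcont
    (fun t ht => (hFder t ht).hasDerivWithinAt) hInt
  rw [setIntegral_congr_set Ioo_ae_eq_Ioc, ← intervalIntegral.integral_of_le hh.le, hFTC,
    hTopU, hTopD, hBotU]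
  ring

lemma poincare_line (hρ : 0 < ρ) (hh : 0 < h) (hu : ContDiffOn ℝ 2 u (closure (cyl ρ h)))
    {q : ℝ × ℝ} (hq : q ∈ disc ρ) (hBotU : u ![q.1, q.2, 0] = 0) :
    ∫ t in Ioo (0:ℝ) h, (u ![q.1, q.2, t])^2
      ≤ h^2 * ∫ t in Ioo (0:ℝ) h, (pdC ρ h 2 u ![q.1, q.2, t])^2 := by
  have hdq : q.1^2 + q.2^2 < ρ^2 := hq
  have hmapsK : ∀ t : ℝ, t ∈ Icc (0:ℝ) h → (![q.1, q.2, t] : Fin 3 → ℝ) ∈ closure (cyl ρ h) :=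
    fun t ht => mem_K_mk hρ hh hdq.le ht.1 ht.2
  have hmemC : ∀ t : ℝ, t ∈ Ioo (0:ℝ) h → (![q.1, q.2, t] : Fin 3 → ℝ) ∈ cyl ρ h :=
    fun t ht => mem_cyl_mk hdq ht.1 ht.2
  have hdu : ∀ t ∈ Ioo (0:ℝ) h, HasDerivAt (fun t : ℝ => u ![q.1, q.2, t])
      (pdC ρ h 2 u ![q.1, q.2, t]) t :=
    fun t ht => (hasFDerivAt_u_interior hu (hmemC t ht)).comp_hasDerivAt t (line_gamma_deriv q t)
  have hucont : ContinuousOn (fun t : ℝ => u ![q.1, q.2, t]) (Icc (0:ℝ) h) :=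
    hu.continuousOn.comp (line_gamma_cont q).continuousOn hmapsK
  have hp2cont : ContinuousOn (fun t : ℝ => pdC ρ h 2 u ![q.1, q.2, t]) (Icc (0:ℝ) h) :=
    (continuousOn_pdC hρ hh hu 2).comp (line_gamma_cont q).continuousOn hmapsK
  set Cq := ∫ t in Ioo (0:ℝ) h, (pdC ρ h 2 u ![q.1, q.2, t])^2 with hCq_def
  have hCq0 : 0 ≤ Cq := setIntegral_nonneg measurableSet_Ioo (fun t _ => sq_nonneg _)
  have hp2sqInt : IntegrableOn (fun t : ℝ => (pdC ρ h 2 u ![q.1, q.2, t])^2) (Ioo (0:ℝ) h) :=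
    (((hp2cont.pow 2).integrableOn_compact isCompact_Icc).mono_set Ioo_subset_Icc_self)
  have hbound : ∀ t ∈ Ioo (0:ℝ) h, (u ![q.1, q.2, t])^2 ≤ h * Cq := by
    intro t ht
    have hcont' : ContinuousOn (fun s : ℝ => u ![q.1, q.2, s]) (Icc (0:ℝ) t) :=
      hucont.mono (Icc_subset_Icc le_rfl ht.2.le)
    have hint' : IntervalIntegrable (fun s : ℝ => pdC ρ h 2 u ![q.1, q.2, s]) volume 0 t :=
      ContinuousOn.intervalIntegrable
        (by rw [uIcc_of_le ht.1.le]; exact hp2cont.mono (Icc_subset_Icc le_rfl ht.2.le))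
    have hftc := intervalIntegral.integral_eq_sub_of_hasDeriv_right_of_le ht.1.le hcont'
      (fun s hs => ((hdu s ⟨hs.1, hs.2.trans ht.2⟩).hasDerivWithinAt)) hint'
    rw [hBotU, sub_zero] at hftc
    haveI : IsFiniteMeasure (volume.restrict (Ioc (0:ℝ) t)) :=
      ⟨by rw [Measure.restrict_apply_univ, Real.volume_Ioc]; exact ENNReal.ofReal_lt_top⟩
    have hIocsub : Ioc (0:ℝ) t ⊆ Icc (0:ℝ) h :=
      fun s hs => ⟨hs.1.le, hs.2.trans ht.2.le⟩
    have hmem2 : MemLp (fun s : ℝ => pdC ρ h 2 u ![q.1, q.2, s]) 2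
        (volume.restrict (Ioc (0:ℝ) t)) :=
      memL2_of_contOn hIocsub isCompact_Icc measurableSet_Ioc hp2cont
    have hmem2n : MemLp (fun s : ℝ => -(pdC ρ h 2 u ![q.1, q.2, s])) 2
        (volume.restrict (Ioc (0:ℝ) t)) := hmem2.neg
    have hone : MemLp (fun _ : ℝ => (1:ℝ)) 2 (volume.restrict (Ioc (0:ℝ) t)) := memLp_const 1
    set I2 := ∫ s in Ioc (0:ℝ) t, (pdC ρ h 2 u ![q.1, q.2, s])^2 with hI2_def
    have hI20 : 0 ≤ I2 := setIntegral_nonneg measurableSet_Ioc (fun s _ => sq_nonneg _)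
    have hone_sq : ∫ s in Ioc (0:ℝ) t, ((1:ℝ))^2 = t := by
      rw [one_pow]
      simp [Real.volume_Ioc, ENNReal.toReal_ofReal ht.1.le, ht.1.le]
    have hval : ∫ s in Ioc (0:ℝ) t, pdC ρ h 2 u ![q.1, q.2, s] = u ![q.1, q.2, t] := by
      rw [← intervalIntegral.integral_of_le ht.1.le]; exact hftc
    have hcs1 := cs2 hmem2 hone
    have hcs2 := cs2 hmem2n hone
    simp only [mul_one, neg_sq, integral_neg] at hcs1 hcs2
    rw [hval] at hcs1 hcs2
    rw [hone_sq] at hcs1 hcs2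
    have hsq : (u ![q.1, q.2, t])^2 ≤ (Real.sqrt I2 * Real.sqrt t)^2 := by
      apply sq_le_sq'
      · rw [neg_le]
        exact hcs2
      · exact hcs1
    have hsq2 : (Real.sqrt I2 * Real.sqrt t)^2 = I2 * t := by
      rw [mul_pow, Real.sq_sqrt hI20, Real.sq_sqrt ht.1.le]
    have hI2le : I2 ≤ Cq := by
      rw [hI2_def, hCq_def]
      apply setIntegral_mono_set hp2sqInt
      · exact Filter.Eventually.of_forall fun s => sq_nonneg _
      · exact Filter.Eventually.of_forall (fun s hs => ⟨hs.1, hs.2.trans_lt ht.2⟩)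
    calc (u ![q.1, q.2, t])^2 ≤ I2 * t := by rw [← hsq2]; exact hsq
      _ ≤ Cq * h := by
        apply mul_le_mul hI2le ht.2.le ht.1.le hCq0
      _ = h * Cq := mul_comm _ _
  have husqInt : IntegrableOn (fun t : ℝ => (u ![q.1, q.2, t])^2) (Ioo (0:ℝ) h) :=
    (((hucont.pow 2).integrableOn_compact isCompact_Icc).mono_set Ioo_subset_Icc_self)
  have hmono := setIntegral_mono_on husqInt (integrableOn_const measure_Ioo_lt_top.ne)
    measurableSet_Ioo hbound
  calc ∫ t in Ioo (0:ℝ) h, (u ![q.1, q.2, t])^2 ≤ ∫ _ in Ioo (0:ℝ) h, h * Cq := hmono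
    _ = h * (h * Cq) := by
      rw [setIntegral_const, measureReal_def, Real.volume_Ioo, smul_eq_mul, sub_zero,
        ENNReal.toReal_ofReal hh.le]
    _ = h^2 * Cq := by ring

end Line

section GreenSlice
variable {ρ h : ℝ} {u : (Fin 3 → ℝ) → ℝ}

set_option maxHeartbeats 2000000 in
lemma green_slice (hρ : 0 < ρ) (hh : 0 < h) (hu : ContDiffOn ℝ 2 u (closure (cyl ρ h)))
    (hlat : ∀ x y z : ℝ, x ^ 2 + y ^ 2 = ρ ^ 2 → 0 ≤ z → z ≤ h →
      x * pdC ρ h 0 u ![x, y, z] + y * pdC ρ h 1 u ![x, y, z] = 0)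
    {z : ℝ} (hz : z ∈ Ioo (0:ℝ) h) :
    ∫ q in disc ρ, ((pdC ρ h 0 u ![q.1, q.2, z]) ^ 2 + (pdC ρ h 1 u ![q.1, q.2, z]) ^ 2
      + u ![q.1, q.2, z] * (pdC ρ h 0 (pdC ρ h 0 u) ![q.1, q.2, z]
        + pdC ρ h 1 (pdC ρ h 1 u) ![q.1, q.2, z])) = 0 := by
  classical
  set K := closure (cyl ρ h) with hK
  -- the inclusion of the slice
  set L : (ℝ × ℝ) →L[ℝ] (Fin 3 → ℝ) :=
    (ContinuousLinearMap.fst ℝ ℝ ℝ).smulRight (Pi.single 0 1)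
      + (ContinuousLinearMap.snd ℝ ℝ ℝ).smulRight (Pi.single 1 1) with hLdef
  have hLapp : ∀ v : ℝ × ℝ, L v = v.1 • (Pi.single 0 1 : Fin 3 → ℝ) + v.2 • (Pi.single 1 1 : Fin 3 → ℝ) := fun v => rfl
  have hιeq : (fun q : ℝ × ℝ => (![q.1, q.2, z] : Fin 3 → ℝ))
      = fun q : ℝ × ℝ => (![0, 0, z] : Fin 3 → ℝ) + L q := by
    funext q
    funext i
    rw [hLapp]
    fin_cases i <;>
      simp [Pi.single_apply]
  have hι : ∀ q : ℝ × ℝ, HasFDerivAt (fun q : ℝ × ℝ => (![q.1, q.2, z] : Fin 3 → ℝ)) L q := by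
    intro q
    rw [hιeq]
    exact L.hasFDerivAt.const_add _
  have hιcont : Continuous (fun q : ℝ × ℝ => (![q.1, q.2, z] : Fin 3 → ℝ)) := by
    rw [hιeq]; exact continuous_const.add L.continuous
  have hmemC : ∀ q : ℝ × ℝ, q ∈ disc ρ → (![q.1, q.2, z] : Fin 3 → ℝ) ∈ cyl ρ h :=
    fun q hq => mem_cyl_mk hq hz.1 hz.2
  have hmapsK : ∀ q : ℝ × ℝ, q.1^2 + q.2^2 ≤ ρ^2 → (![q.1, q.2, z] : Fin 3 → ℝ) ∈ K :=
    fun q hq => mem_K_mk hρ hh hq hz.1.le hz.2.le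
  -- slice functions A = u·u_x, B = u·u_y and their derivatives
  set A : ℝ × ℝ → ℝ := fun q => u ![q.1, q.2, z] * pdC ρ h 0 u ![q.1, q.2, z] with hA_def
  set B : ℝ × ℝ → ℝ := fun q => u ![q.1, q.2, z] * pdC ρ h 1 u ![q.1, q.2, z] with hB_def
  set DA : ℝ × ℝ → (ℝ × ℝ →L[ℝ] ℝ) := fun q =>
    u ![q.1, q.2, z] • ((fderivWithin ℝ (pdC ρ h 0 u) K ![q.1, q.2, z]).comp L)
      + pdC ρ h 0 u ![q.1, q.2, z] • ((fderivWithin ℝ u K ![q.1, q.2, z]).comp L) with hDA_def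
  set DB : ℝ × ℝ → (ℝ × ℝ →L[ℝ] ℝ) := fun q =>
    u ![q.1, q.2, z] • ((fderivWithin ℝ (pdC ρ h 1 u) K ![q.1, q.2, z]).comp L)
      + pdC ρ h 1 u ![q.1, q.2, z] • ((fderivWithin ℝ u K ![q.1, q.2, z]).comp L) with hDB_def
  have hA : ∀ q ∈ disc ρ, HasFDerivAt A (DA q) q := by
    intro q hq
    have h1 : HasFDerivAt (fun q : ℝ × ℝ => u ![q.1, q.2, z])
        ((fderivWithin ℝ u K ![q.1, q.2, z]).comp L) q :=
      (hasFDerivAt_u_interior hu (hmemC q hq)).comp q (hι q)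
    have h2 : HasFDerivAt (fun q : ℝ × ℝ => pdC ρ h 0 u ![q.1, q.2, z])
        ((fderivWithin ℝ (pdC ρ h 0 u) K ![q.1, q.2, z]).comp L) q :=
      by have := (hasFDerivAt_pdC_interior hρ hh hu 0 (hmemC q hq)).comp q (hι q); exact this
    exact h1.mul h2
  have hB : ∀ q ∈ disc ρ, HasFDerivAt B (DB q) q := by
    intro q hq
    have h1 : HasFDerivAt (fun q : ℝ × ℝ => u ![q.1, q.2, z])
        ((fderivWithin ℝ u K ![q.1, q.2, z]).comp L) q :=
      (hasFDerivAt_u_interior hu (hmemC q hq)).comp q (hι q)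
    have h2 : HasFDerivAt (fun q : ℝ × ℝ => pdC ρ h 1 u ![q.1, q.2, z])
        ((fderivWithin ℝ (pdC ρ h 1 u) K ![q.1, q.2, z]).comp L) q :=
      by have := (hasFDerivAt_pdC_interior hρ hh hu 1 (hmemC q hq)).comp q (hι q); exact this
    exact h1.mul h2
  -- polar parametrization
  set Φ : ℝ × ℝ → ℝ × ℝ := fun p => (p.1 * cos p.2, p.1 * sin p.2) with hΦ_def
  set f : ℝ × ℝ → ℝ := fun p => p.1 * (cos p.2 * A (Φ p) + sin p.2 * B (Φ p)) with hf_def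
  set g : ℝ × ℝ → ℝ := fun p => (-sin p.2) * A (Φ p) + cos p.2 * B (Φ p) with hg_def
  have hcos : ∀ p : ℝ × ℝ, HasFDerivAt (fun p : ℝ × ℝ => cos p.2)
      ((-sin p.2) • ContinuousLinearMap.snd ℝ ℝ ℝ) p :=
    fun p => (Real.hasDerivAt_cos p.2).comp_hasFDerivAt p hasFDerivAt_snd
  have hsin : ∀ p : ℝ × ℝ, HasFDerivAt (fun p : ℝ × ℝ => sin p.2)
      ((cos p.2) • ContinuousLinearMap.snd ℝ ℝ ℝ) p :=
    fun p => (Real.hasDerivAt_sin p.2).comp_hasFDerivAt p hasFDerivAt_snd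
  set LΦ : ℝ × ℝ → (ℝ × ℝ →L[ℝ] ℝ × ℝ) := fun p =>
    (p.1 • ((-sin p.2) • ContinuousLinearMap.snd ℝ ℝ ℝ)
        + cos p.2 • ContinuousLinearMap.fst ℝ ℝ ℝ).prod
      (p.1 • ((cos p.2) • ContinuousLinearMap.snd ℝ ℝ ℝ)
        + sin p.2 • ContinuousLinearMap.fst ℝ ℝ ℝ) with hLΦ_def
  have hΦd : ∀ p : ℝ × ℝ, HasFDerivAt Φ (LΦ p) p :=
    fun p => (hasFDerivAt_fst.mul (hcos p)).prodMk (hasFDerivAt_fst.mul (hsin p))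
  have hΦmem : ∀ p : ℝ × ℝ, p.1 ∈ Ioo (0:ℝ) ρ → Φ p ∈ disc ρ := by
    rintro p ⟨h1, h2⟩
    show (p.1 * cos p.2)^2 + (p.1 * sin p.2)^2 < ρ^2
    have e : (p.1 * cos p.2)^2 + (p.1 * sin p.2)^2 = p.1^2 := by
      linear_combination p.1^2 * (sin_sq_add_cos_sq p.2)
    rw [e]; exact sq_lt_sq' (by linarith) h2
  set DF : ℝ × ℝ → (ℝ × ℝ →L[ℝ] ℝ) := fun p =>
    p.1 • ((cos p.2 • ((DA (Φ p)).comp (LΦ p))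
        + A (Φ p) • ((-sin p.2) • ContinuousLinearMap.snd ℝ ℝ ℝ))
      + (sin p.2 • ((DB (Φ p)).comp (LΦ p))
        + B (Φ p) • ((cos p.2) • ContinuousLinearMap.snd ℝ ℝ ℝ)))
    + (cos p.2 * A (Φ p) + sin p.2 * B (Φ p)) • ContinuousLinearMap.fst ℝ ℝ ℝ with hDF_def
  set DG : ℝ × ℝ → (ℝ × ℝ →L[ℝ] ℝ) := fun p =>
    ((-sin p.2) • ((DA (Φ p)).comp (LΦ p))
        + A (Φ p) • (-((cos p.2) • ContinuousLinearMap.snd ℝ ℝ ℝ)))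
    + (cos p.2 • ((DB (Φ p)).comp (LΦ p))
        + B (Φ p) • ((-sin p.2) • ContinuousLinearMap.snd ℝ ℝ ℝ)) with hDG_def
  have hfd : ∀ p ∈ Ioo (0:ℝ) ρ ×ˢ Ioo (-π) π, HasFDerivAt f (DF p) p := by
    rintro p ⟨hp1, _⟩
    have hA' : HasFDerivAt (fun p : ℝ × ℝ => A (Φ p)) ((DA (Φ p)).comp (LΦ p)) p :=
      (hA (Φ p) (hΦmem p hp1)).comp p (hΦd p)
    have hB' : HasFDerivAt (fun p : ℝ × ℝ => B (Φ p)) ((DB (Φ p)).comp (LΦ p)) p :=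
      (hB (Φ p) (hΦmem p hp1)).comp p (hΦd p)
    exact hasFDerivAt_fst.mul (((hcos p).mul hA').add ((hsin p).mul hB'))
  have hgd : ∀ p ∈ Ioo (0:ℝ) ρ ×ˢ Ioo (-π) π, HasFDerivAt g (DG p) p := by
    rintro p ⟨hp1, _⟩
    have hA' : HasFDerivAt (fun p : ℝ × ℝ => A (Φ p)) ((DA (Φ p)).comp (LΦ p)) p :=
      (hA (Φ p) (hΦmem p hp1)).comp p (hΦd p)
    have hB' : HasFDerivAt (fun p : ℝ × ℝ => B (Φ p)) ((DB (Φ p)).comp (LΦ p)) p :=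
      (hB (Φ p) (hΦmem p hp1)).comp p (hΦd p)
    exact (((hsin p).neg).mul hA').add ((hcos p).mul hB')
  have hval : ∀ p : ℝ × ℝ, DF p (1, 0) + DG p (0, 1) =
      p.1 * ((pdC ρ h 0 u ![p.1 * cos p.2, p.1 * sin p.2, z]) ^ 2
        + (pdC ρ h 1 u ![p.1 * cos p.2, p.1 * sin p.2, z]) ^ 2
        + u ![p.1 * cos p.2, p.1 * sin p.2, z]
          * (pdC ρ h 0 (pdC ρ h 0 u) ![p.1 * cos p.2, p.1 * sin p.2, z]
            + pdC ρ h 1 (pdC ρ h 1 u) ![p.1 * cos p.2, p.1 * sin p.2, z])) := by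
    intro p
    have trig := sin_sq_add_cos_sq p.2
    simp only [hDF_def, hDG_def, hDA_def, hDB_def, hLΦ_def, hA_def, hB_def, hΦ_def, hLdef, pdC,
      ContinuousLinearMap.add_apply, ContinuousLinearMap.coe_smul', Pi.smul_apply,
      ContinuousLinearMap.comp_apply, ContinuousLinearMap.prod_apply,
      ContinuousLinearMap.neg_apply, ContinuousLinearMap.smulRight_apply,
      ContinuousLinearMap.coe_fst', ContinuousLinearMap.coe_snd', smul_eq_mul,
      mul_zero, mul_one, add_zero, zero_add, neg_zero, ContinuousLinearMap.map_add,
      ContinuousLinearMap.map_smul, smul_eq_mul]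
    ring_nf
    linear_combination (p.1 * ((u ![p.1 * cos p.2, p.1 * sin p.2, z])
      * (fderivWithin ℝ (pdC ρ h 0 u) K ![p.1 * cos p.2, p.1 * sin p.2, z] (Pi.single 0 1)
        + fderivWithin ℝ (pdC ρ h 1 u) K ![p.1 * cos p.2, p.1 * sin p.2, z] (Pi.single 1 1))
      + (fderivWithin ℝ u K ![p.1 * cos p.2, p.1 * sin p.2, z] (Pi.single 0 1))^2
      + (fderivWithin ℝ u K ![p.1 * cos p.2, p.1 * sin p.2, z] (Pi.single 1 1))^2)) * trig
  -- continuity on the closed rectangle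
  have hle1 : (0:ℝ) ≤ ρ := hρ.le
  have hle2 : (-π:ℝ) ≤ π := by linarith [pi_pos]
  have hΦcont : Continuous Φ := by
    rw [hΦ_def]
    exact (continuous_fst.mul (Real.continuous_cos.comp continuous_snd)).prodMk
      (continuous_fst.mul (Real.continuous_sin.comp continuous_snd))
  have hmapsΦ : ∀ p : ℝ × ℝ, p ∈ Icc (0:ℝ) ρ ×ˢ Icc (-π) π →
      (Φ p).1 ^ 2 + (Φ p).2 ^ 2 ≤ ρ ^ 2 := by
    rintro p ⟨⟨h1, h2⟩, _⟩
    show (p.1 * cos p.2)^2 + (p.1 * sin p.2)^2 ≤ ρ^2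
    have e : (p.1 * cos p.2)^2 + (p.1 * sin p.2)^2 = p.1^2 := by
      linear_combination p.1^2 * (sin_sq_add_cos_sq p.2)
    rw [e]; nlinarith
  have hψcont : Continuous (fun p : ℝ × ℝ => (![(Φ p).1, (Φ p).2, z] : Fin 3 → ℝ)) :=
    hιcont.comp hΦcont
  have hψmaps : ∀ p : ℝ × ℝ, p ∈ Icc (0:ℝ) ρ ×ˢ Icc (-π) π →
      (![(Φ p).1, (Φ p).2, z] : Fin 3 → ℝ) ∈ K :=
    fun p hp => hmapsK _ (hmapsΦ p hp)
  have hAΦc : ContinuousOn (fun p : ℝ × ℝ => A (Φ p)) (Icc (0:ℝ) ρ ×ˢ Icc (-π) π) := by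
    rw [hA_def]
    exact ((hu.continuousOn.comp hψcont.continuousOn hψmaps).mul
      ((continuousOn_pdC hρ hh hu 0).comp hψcont.continuousOn hψmaps))
  have hBΦc : ContinuousOn (fun p : ℝ × ℝ => B (Φ p)) (Icc (0:ℝ) ρ ×ˢ Icc (-π) π) := by
    rw [hB_def]
    exact ((hu.continuousOn.comp hψcont.continuousOn hψmaps).mul
      ((continuousOn_pdC hρ hh hu 1).comp hψcont.continuousOn hψmaps))
  have hfc : ContinuousOn f (Icc (0:ℝ) ρ ×ˢ Icc (-π) π) := by
    rw [hf_def]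
    exact continuous_fst.continuousOn.mul
      ((((Real.continuous_cos.comp continuous_snd).continuousOn).mul hAΦc).add
        (((Real.continuous_sin.comp continuous_snd).continuousOn).mul hBΦc))
  have hgc : ContinuousOn g (Icc (0:ℝ) ρ ×ˢ Icc (-π) π) := by
    rw [hg_def]
    exact ((((Real.continuous_sin.comp continuous_snd).neg).continuousOn).mul hAΦc).add
      (((Real.continuous_cos.comp continuous_snd).continuousOn).mul hBΦc)
  have hWcont : ContinuousOn (fun p : ℝ × ℝ => DF p (1, 0) + DG p (0, 1))
      (Icc (0:ℝ) ρ ×ˢ Icc (-π) π) := by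
    rw [show (fun p : ℝ × ℝ => DF p (1, 0) + DG p (0, 1))
        = fun p : ℝ × ℝ => p.1 * ((pdC ρ h 0 u ![(Φ p).1, (Φ p).2, z]) ^ 2
          + (pdC ρ h 1 u ![(Φ p).1, (Φ p).2, z]) ^ 2
          + u ![(Φ p).1, (Φ p).2, z] * (pdC ρ h 0 (pdC ρ h 0 u) ![(Φ p).1, (Φ p).2, z]
            + pdC ρ h 1 (pdC ρ h 1 u) ![(Φ p).1, (Φ p).2, z])) from funext fun p => hval p]
    apply continuous_fst.continuousOn.mul
    apply ContinuousOn.add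
    apply ContinuousOn.add
    · exact (((continuousOn_pdC hρ hh hu 0).comp hψcont.continuousOn hψmaps).pow 2)
    · exact (((continuousOn_pdC hρ hh hu 1).comp hψcont.continuousOn hψmaps).pow 2)
    · exact (hu.continuousOn.comp hψcont.continuousOn hψmaps).mul
        (((continuousOn_pdC2 hρ hh hu 0 0).comp hψcont.continuousOn hψmaps).add
          ((continuousOn_pdC2 hρ hh hu 1 1).comp hψcont.continuousOn hψmaps))
  have Hi : IntegrableOn (fun p : ℝ × ℝ => DF p (1, 0) + DG p (0, 1))
      (Icc (0:ℝ) ρ ×ˢ Icc (-π) π) :=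
    hWcont.integrableOn_compact (isCompact_Icc.prod isCompact_Icc)
  have hdiv := integral2_divergence_prod_of_hasFDerivAt_off_countable f g DF DG
    0 (-π) ρ π ∅ Set.countable_empty
    (by rwa [Set.uIcc_of_le hle1, Set.uIcc_of_le hle2])
    (by rwa [Set.uIcc_of_le hle1, Set.uIcc_of_le hle2])
    (by
      intro x hx
      rw [min_eq_left hle1, max_eq_right hle1, min_eq_left hle2, max_eq_right hle2,
        diff_empty] at hx
      exact hfd x hx)
    (by
      intro x hx
      rw [min_eq_left hle1, max_eq_right hle1, min_eq_left hle2, max_eq_right hle2,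
        diff_empty] at hx
      exact hgd x hx)
    (by rwa [Set.uIcc_of_le hle1, Set.uIcc_of_le hle2])
  -- boundary terms vanish
  have hg_per : ∀ x : ℝ, g (x, π) = g (x, -π) := by
    intro x
    simp [hg_def, hΦ_def, Real.sin_pi, Real.cos_pi, Real.sin_neg, Real.cos_neg]
  have hf_rho : ∀ y : ℝ, f (ρ, y) = 0 := by
    intro y
    have hlc : (ρ * cos y)^2 + (ρ * sin y)^2 = ρ^2 := by
      linear_combination ρ^2 * (sin_sq_add_cos_sq y)
    have hl := hlat (ρ * cos y) (ρ * sin y) z hlc hz.1.le hz.2.le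
    simp only [hf_def, hA_def, hB_def, hΦ_def]
    linear_combination (u ![ρ * cos y, ρ * sin y, z]) * hl
  have hf_zero : ∀ y : ℝ, f (0, y) = 0 := by
    intro y
    simp [hf_def]
  rw [intervalIntegral.integral_congr (g := fun x : ℝ => g (x, -π))
      (fun x _ => hg_per x)] at hdiv
  simp only [hf_rho, hf_zero, sub_self, intervalIntegral.integral_const, smul_zero,
    zero_add, add_zero, sub_zero, zero_sub, intervalIntegral.integral_zero] at hdiv
  -- convert to the disc integral
  rw [polar_disc hρ]
  have hint2 : Integrable (fun p : ℝ × ℝ => DF p (1, 0) + DG p (0, 1))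
      ((volume.restrict (Ioo (0:ℝ) ρ)).prod (volume.restrict (Ioo (-π) π))) := by
    rw [Measure.prod_restrict, ← Measure.volume_eq_prod]
    exact Hi.mono_set (Set.prod_mono Ioo_subset_Icc_self Ioo_subset_Icc_self)
  have hrw : (fun p : ℝ × ℝ => p.1 * ((pdC ρ h 0 u ![p.1 * cos p.2, p.1 * sin p.2, z]) ^ 2
        + (pdC ρ h 1 u ![p.1 * cos p.2, p.1 * sin p.2, z]) ^ 2
        + u ![p.1 * cos p.2, p.1 * sin p.2, z]
          * (pdC ρ h 0 (pdC ρ h 0 u) ![p.1 * cos p.2, p.1 * sin p.2, z]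
            + pdC ρ h 1 (pdC ρ h 1 u) ![p.1 * cos p.2, p.1 * sin p.2, z])))
      = fun p : ℝ × ℝ => DF p (1, 0) + DG p (0, 1) := funext fun p => (hval p).symm
  show (∫ p in Ioo (0:ℝ) ρ ×ˢ Ioo (-π) π, p.1
      * ((pdC ρ h 0 u ![p.1 * cos p.2, p.1 * sin p.2, z]) ^ 2
        + (pdC ρ h 1 u ![p.1 * cos p.2, p.1 * sin p.2, z]) ^ 2
        + u ![p.1 * cos p.2, p.1 * sin p.2, z]
          * (pdC ρ h 0 (pdC ρ h 0 u) ![p.1 * cos p.2, p.1 * sin p.2, z]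
            + pdC ρ h 1 (pdC ρ h 1 u) ![p.1 * cos p.2, p.1 * sin p.2, z]))) = 0
  rw [hrw, Measure.volume_eq_prod, ← Measure.prod_restrict, integral_prod _ hint2]
  have hinner : ∀ x : ℝ, ∫ y in Ioo (-π:ℝ) π, (DF (x, y) (1, 0) + DG (x, y) (0, 1))
      = ∫ y in (-π:ℝ)..π, (DF (x, y) (1, 0) + DG (x, y) (0, 1)) := by
    intro x
    rw [setIntegral_congr_set Ioo_ae_eq_Ioc, ← intervalIntegral.integral_of_le hle2]
  simp only [hinner]
  rw [setIntegral_congr_set Ioo_ae_eq_Ioc, ← intervalIntegral.integral_of_le hle1]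
  exact hdiv

end GreenSlice


set_option maxHeartbeats 1000000 in
/-- If `u ∈ C²(closure Ω)` satisfies (BC), then
`∫_Ω |∇u|² ≤ πρ²(2φα + φ²) + 4h² ∫_Ω (Δu)²`. -/
theorem gradient_estimate_cylinder (ρ h : ℝ) (hρ : 0 < ρ) (hh : 1 / 2 < h)
    (u : (Fin 3 → ℝ) → ℝ) (φ α : ℝ)
    (hu : ContDiffOn ℝ 2 u (closure (cyl ρ h)))
    (hbc : BC ρ h u φ α) :
    (∫ x in cyl ρ h, ∑ i, (pdC ρ h i u x) ^ 2) ≤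
      π * ρ ^ 2 * (2 * φ * α + φ ^ 2) + 4 * h ^ 2 * ∫ x in cyl ρ h, (lapC ρ h u x) ^ 2 := by
  obtain ⟨hbc1, hbc2⟩ := hbc
  have hh0 : 0 < h := by linarith
  simp only [lapC, Fin.sum_univ_three]
  have hcu : ContinuousOn u (closure (cyl ρ h)) := hu.continuousOn
  have hc0 := continuousOn_pdC hρ hh0 hu 0
  have hc1 := continuousOn_pdC hρ hh0 hu 1
  have hc2 := continuousOn_pdC hρ hh0 hu 2
  have hd00 := continuousOn_pdC2 hρ hh0 hu 0 0
  have hd11 := continuousOn_pdC2 hρ hh0 hu 1 1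
  have hd22 := continuousOn_pdC2 hρ hh0 hu 2 2
  -- integrability
  have hintW1 : IntegrableOn (fun x => (pdC ρ h 0 u x)^2 + (pdC ρ h 1 u x)^2
      + u x * (pdC ρ h 0 (pdC ρ h 0 u) x + pdC ρ h 1 (pdC ρ h 1 u) x)) (cyl ρ h) :=
    integrableOn_cyl_of_continuousOn hρ hh0
      (((hc0.pow 2).add (hc1.pow 2)).add (hcu.mul (hd00.add hd11)))
  have hintZ : IntegrableOn (fun x => (pdC ρ h 2 u x)^2
      + u x * pdC ρ h 2 (pdC ρ h 2 u) x) (cyl ρ h) :=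
    integrableOn_cyl_of_continuousOn hρ hh0 ((hc2.pow 2).add (hcu.mul hd22))
  have hintU2 : IntegrableOn (fun x => (u x)^2) (cyl ρ h) :=
    integrableOn_cyl_of_continuousOn hρ hh0 (hcu.pow 2)
  have hintP2 : IntegrableOn (fun x => (pdC ρ h 2 u x)^2) (cyl ρ h) :=
    integrableOn_cyl_of_continuousOn hρ hh0 (hc2.pow 2)
  have hintG : IntegrableOn (fun x => (pdC ρ h 0 u x)^2 + (pdC ρ h 1 u x)^2
      + (pdC ρ h 2 u x)^2) (cyl ρ h) :=
    integrableOn_cyl_of_continuousOn hρ hh0 (((hc0.pow 2).add (hc1.pow 2)).add (hc2.pow 2))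
  have hintUL : IntegrableOn (fun x => u x * (pdC ρ h 0 (pdC ρ h 0 u) x
      + pdC ρ h 1 (pdC ρ h 1 u) x + pdC ρ h 2 (pdC ρ h 2 u) x)) (cyl ρ h) :=
    integrableOn_cyl_of_continuousOn hρ hh0 (hcu.mul ((hd00.add hd11).add hd22))
  -- Green's identity, horizontal part
  have G1 : ∫ x in cyl ρ h, ((pdC ρ h 0 u x)^2 + (pdC ρ h 1 u x)^2
      + u x * (pdC ρ h 0 (pdC ρ h 0 u) x + pdC ρ h 1 (pdC ρ h 1 u) x)) = 0 := by
    rw [integral_cyl_iterated hρ hh0 hintW1]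
    calc ∫ z in Ioo (0:ℝ) h, ∫ q in disc ρ, ((pdC ρ h 0 u ![q.1, q.2, z])^2
          + (pdC ρ h 1 u ![q.1, q.2, z])^2
          + u ![q.1, q.2, z] * (pdC ρ h 0 (pdC ρ h 0 u) ![q.1, q.2, z]
            + pdC ρ h 1 (pdC ρ h 1 u) ![q.1, q.2, z]))
        = ∫ _ in Ioo (0:ℝ) h, (0:ℝ) :=
          setIntegral_congr_fun measurableSet_Ioo
            (fun z hz => green_slice hρ hh0 hu hbc2 hz)
      _ = 0 := by simp
  -- Green's identity, vertical part
  have G2 : ∫ x in cyl ρ h, ((pdC ρ h 2 u x)^2 + u x * pdC ρ h 2 (pdC ρ h 2 u) x)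
      = π * ρ^2 * (φ * α) := by
    rw [integral_cyl_iterated_swap hρ hh0 hintZ]
    have harea : (volume (disc ρ)).toReal = π * ρ^2 := by
      have h1 := area_disc hρ
      rwa [setIntegral_const, smul_eq_mul, mul_one] at h1
    have hq0 : ∀ q ∈ disc ρ, (∫ z in Ioo (0:ℝ) h, ((pdC ρ h 2 u ![q.1, q.2, z])^2
        + u ![q.1, q.2, z] * pdC ρ h 2 (pdC ρ h 2 u) ![q.1, q.2, z])) = φ * α := by
      intro q hq
      obtain ⟨hTopU, hTopD, hBotU, _⟩ := hbc1 q.1 q.2 (le_of_lt hq)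
      exact green_line hρ hh0 hu hq hTopU hTopD hBotU
    rw [setIntegral_congr_fun measurableSet_disc hq0, setIntegral_const, measureReal_def, harea, smul_eq_mul]
  -- Poincaré inequality
  have P : ∫ x in cyl ρ h, (u x)^2 ≤ h^2 * ∫ x in cyl ρ h, (pdC ρ h 2 u x)^2 := by
    rw [integral_cyl_iterated_swap hρ hh0 hintU2, integral_cyl_iterated_swap hρ hh0 hintP2,
      ← integral_const_mul]
    apply setIntegral_mono_on
    · exact (integrableOn_prod_of_cyl hρ hh0 hintU2).integral_prod_right
    · exact ((integrableOn_prod_of_cyl hρ hh0 hintP2).integral_prod_right).const_mul (h^2)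
    · exact measurableSet_disc
    · intro q hq
      obtain ⟨_, _, hBotU, _⟩ := hbc1 q.1 q.2 (le_of_lt hq)
      exact poincare_line hρ hh0 hu hq hBotU
  -- notation
  set A := ∫ x in cyl ρ h, ((pdC ρ h 0 u x)^2 + (pdC ρ h 1 u x)^2 + (pdC ρ h 2 u x)^2)
    with hA_def
  set Bq := ∫ x in cyl ρ h, (pdC ρ h 0 (pdC ρ h 0 u) x + pdC ρ h 1 (pdC ρ h 1 u) x
      + pdC ρ h 2 (pdC ρ h 2 u) x)^2 with hB_def
  set I := ∫ x in cyl ρ h, u x * (pdC ρ h 0 (pdC ρ h 0 u) x + pdC ρ h 1 (pdC ρ h 1 u) x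
      + pdC ρ h 2 (pdC ρ h 2 u) x) with hI_def
  set U2 := ∫ x in cyl ρ h, (u x)^2 with hU2_def
  set A2 := ∫ x in cyl ρ h, (pdC ρ h 2 u x)^2 with hA2_def
  -- Green combined: A + I = πρ²φα
  have key2 : A + I = π * ρ^2 * (φ * α) := by
    rw [hA_def, hI_def, ← integral_add hintG hintUL]
    rw [show (fun x => ((pdC ρ h 0 u x)^2 + (pdC ρ h 1 u x)^2 + (pdC ρ h 2 u x)^2)
          + u x * (pdC ρ h 0 (pdC ρ h 0 u) x + pdC ρ h 1 (pdC ρ h 1 u) x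
            + pdC ρ h 2 (pdC ρ h 2 u) x))
        = fun x => ((pdC ρ h 0 u x)^2 + (pdC ρ h 1 u x)^2
          + u x * (pdC ρ h 0 (pdC ρ h 0 u) x + pdC ρ h 1 (pdC ρ h 1 u) x))
          + ((pdC ρ h 2 u x)^2 + u x * pdC ρ h 2 (pdC ρ h 2 u) x)
      from funext fun x => by ring]
    rw [integral_add hintW1 hintZ, G1, G2, zero_add]
  -- Cauchy-Schwarz
  haveI : IsFiniteMeasure (volume.restrict (cyl ρ h)) :=
    ⟨by rw [Measure.restrict_apply_univ]
        exact ((measure_mono (subset_closure (s := cyl ρ h))).trans_lt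
          (isCompact_K hρ hh0).measure_lt_top)⟩
  have hmu : MemLp u 2 (volume.restrict (cyl ρ h)) :=
    memL2_of_contOn subset_closure (isCompact_K hρ hh0) isOpen_cyl.measurableSet hcu
  have hml : MemLp (fun x => pdC ρ h 0 (pdC ρ h 0 u) x + pdC ρ h 1 (pdC ρ h 1 u) x
      + pdC ρ h 2 (pdC ρ h 2 u) x) 2 (volume.restrict (cyl ρ h)) :=
    memL2_of_contOn subset_closure (isCompact_K hρ hh0) isOpen_cyl.measurableSet
      ((hd00.add hd11).add hd22)
  have hcs := cs2 hmu.neg hml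
  simp only [Pi.neg_apply, neg_mul, integral_neg, neg_sq] at hcs
  -- hcs : -I ≤ sqrt U2 * sqrt Bq
  have hA0 : 0 ≤ A := by
    rw [hA_def]
    exact setIntegral_nonneg isOpen_cyl.measurableSet (fun x _ => by positivity)
  have hB0 : 0 ≤ Bq := by
    rw [hB_def]
    exact setIntegral_nonneg isOpen_cyl.measurableSet (fun x _ => sq_nonneg _)
  have hU20 : 0 ≤ U2 := by
    rw [hU2_def]
    exact setIntegral_nonneg isOpen_cyl.measurableSet (fun x _ => sq_nonneg _)
  have hA2A : A2 ≤ A := by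
    rw [hA2_def, hA_def]
    apply setIntegral_mono_on hintP2 hintG isOpen_cyl.measurableSet
    intro x _
    nlinarith [sq_nonneg (pdC ρ h 0 u x), sq_nonneg (pdC ρ h 1 u x)]
  have hUA : U2 ≤ h^2 * A := by
    calc U2 ≤ h^2 * A2 := P
      _ ≤ h^2 * A := by nlinarith
  have hs1 : Real.sqrt U2 ≤ h * Real.sqrt A := by
    calc Real.sqrt U2 ≤ Real.sqrt (h^2 * A) := Real.sqrt_le_sqrt hUA
      _ = h * Real.sqrt A := by
        rw [Real.sqrt_mul (sq_nonneg h), Real.sqrt_sq hh0.le]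
  have hcs' : -I ≤ h * Real.sqrt A * Real.sqrt Bq := by
    calc -I ≤ Real.sqrt U2 * Real.sqrt Bq := hcs
      _ ≤ (h * Real.sqrt A) * Real.sqrt Bq :=
        mul_le_mul_of_nonneg_right hs1 (Real.sqrt_nonneg _)
  nlinarith [key2, hcs', Real.sq_sqrt hA0, Real.sq_sqrt hB0, Real.sqrt_nonneg A,
    Real.sqrt_nonneg Bq, sq_nonneg (Real.sqrt A - h * Real.sqrt Bq),
    mul_nonneg (mul_nonneg pi_pos.le (sq_nonneg ρ)) (sq_nonneg φ),
    mul_nonneg (sq_nonneg h) hB0]
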